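/- Let S be a ring, R a maximal subring of S, and I a nonzero two-sided ideal of S with R ∩ I = {0}. Then the following are equivalent: (1) S is a prime ring; (2) {s ∈ S : sI = 0} = {0} and {s ∈ S : Is = 0} = {0}; (3) I·I ≠ 0, ann_R(I) = {0}, and the only R-homomorphism I → R is the zero map. Moreover, if S is prime then R is prime. -/

import Mathlib

/-- `R` is a maximal subring of `S`. -/
def IsMaximalSubring {S : Type*} [Ring S] (R : Subring S) : Prop :=
  R ≠ ⊤ ∧ ∀ T : Subring S, R ≤ T → T = R ∨ T = ⊤

/-- A ring `A` is prime if `aAb = 0` implies `a = 0` or `b = 0`. -/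
def IsPrimeRing (A : Type*) [Ring A] : Prop :=
  ∀ a b : A, (∀ x : A, a * x * b = 0) → a = 0 ∨ b = 0

/-- An `R`-homomorphism `φ : I → R`, encoded by a function `f : S → S` whose values on
`I` lie in `R` and which is additive, `R`-bilinear and multiplicative on `I`. -/
def IsRHomToR {S : Type*} [Ring S] (R : Subring S) (I : TwoSidedIdeal S)
    (f : S → S) : Prop :=
  (∀ i ∈ I, f i ∈ R) ∧
  (∀ i ∈ I, ∀ j ∈ I, f (i + j) = f i + f j) ∧
  (∀ r ∈ R, ∀ i ∈ I, f (r * i) = r * f i) ∧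
  (∀ r ∈ R, ∀ i ∈ I, f (i * r) = f i * r) ∧
  (∀ i ∈ I, ∀ j ∈ I, f (i * j) = f i * f j)

section Aux

variable {S : Type*} [Ring S] {R : Subring S} {I : TwoSidedIdeal S}

private lemma exist_ne_zero (hI : I ≠ ⊥) : ∃ x, x ∈ I ∧ x ≠ 0 := by
  by_contra h
  push_neg at h
  apply hI
  apply SetLike.ext
  intro x
  constructor
  · intro hx
    exact h x hx
  · intro hx
    rw [show x = (0:S) from hx]
    exact I.zero_mem

/-- Key dichotomy: a multiplicatively closed `R`-sub-bimodule of `I` is zero or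
contains `I`. -/
private lemma dich (hmax : IsMaximalSubring R)
    (hRI : ∀ x : S, x ∈ R → x ∈ I → x = 0)
    (J : S → Prop) (hsub : ∀ x, J x → x ∈ I)
    (h0 : J 0) (hadd : ∀ x y, J x → J y → J (x + y))
    (hneg : ∀ x, J x → J (-x))
    (hL : ∀ r ∈ R, ∀ x, J x → J (r * x))
    (hRm : ∀ r ∈ R, ∀ x, J x → J (x * r))
    (hmul : ∀ x y, J x → J y → J (x * y)) :
    (∀ x, J x → x = 0) ∨ (∀ i ∈ I, J i) := by
  let T : Subring S :=
    { carrier := {s | ∃ r ∈ R, ∃ j, J j ∧ s = r + j}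
      one_mem' := ⟨1, R.one_mem, 0, h0, by first | noncomm_ring | abel⟩
      mul_mem' := by
        intro x y hx hy
        obtain ⟨r, hr, j, hj, rfl⟩ := hx
        obtain ⟨r', hr', j', hj', rfl⟩ := hy
        refine ⟨r * r', R.mul_mem hr hr', r * j' + j * r' + j * j', ?_, by first | noncomm_ring | abel⟩
        exact hadd _ _ (hadd _ _ (hL r hr _ hj') (hRm r' hr' _ hj)) (hmul _ _ hj hj')
      add_mem' := by
        intro x y hx hy
        obtain ⟨r, hr, j, hj, rfl⟩ := hx
        obtain ⟨r', hr', j', hj', rfl⟩ := hy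
        exact ⟨r + r', R.add_mem hr hr', j + j', hadd _ _ hj hj', by first | noncomm_ring | abel⟩
      zero_mem' := ⟨0, R.zero_mem, 0, h0, by first | noncomm_ring | abel⟩
      neg_mem' := by
        intro x hx
        obtain ⟨r, hr, j, hj, rfl⟩ := hx
        exact ⟨-r, R.neg_mem hr, -j, hneg _ hj, by first | noncomm_ring | abel⟩ }
  have hRT : R ≤ T := fun r hr => ⟨r, hr, 0, h0, by first | noncomm_ring | abel⟩
  rcases hmax.2 T hRT with h | h
  · left
    intro x hx
    have hxT : x ∈ T := ⟨0, R.zero_mem, x, hx, by first | noncomm_ring | abel⟩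
    rw [h] at hxT
    exact hRI x hxT (hsub x hx)
  · right
    intro i hi
    have hiT : i ∈ T := h ▸ Subring.mem_top i
    obtain ⟨r, hr, j, hj, hij⟩ := hiT
    have hjI : j ∈ I := hsub j hj
    have hr0 : r = 0 := by
      apply hRI r hr
      have : r = i - j := by rw [hij]; noncomm_ring
      rw [this]
      exact I.sub_mem hi hjI
    rw [hr0, zero_add] at hij
    rw [hij]
    exact hj

/-- Decomposition `S = R + I`. -/
private lemma decomp (hmax : IsMaximalSubring R) (hI : I ≠ ⊥)
    (hRI : ∀ x : S, x ∈ R → x ∈ I → x = 0) :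
    ∀ s : S, ∃ r ∈ R, ∃ i ∈ I, s = r + i := by
  obtain ⟨i₀, hi₀I, hi₀⟩ := exist_ne_zero hI
  let T : Subring S :=
    { carrier := {s | ∃ r ∈ R, ∃ i ∈ I, s = r + i}
      one_mem' := ⟨1, R.one_mem, 0, I.zero_mem, by first | noncomm_ring | abel⟩
      mul_mem' := by
        intro x y hx hy
        obtain ⟨r, hr, j, hj, rfl⟩ := hx
        obtain ⟨r', hr', j', hj', rfl⟩ := hy
        refine ⟨r * r', R.mul_mem hr hr', r * j' + j * r' + j * j', ?_, by first | noncomm_ring | abel⟩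
        exact I.add_mem (I.add_mem (I.mul_mem_left _ _ hj') (I.mul_mem_right _ _ hj))
          (I.mul_mem_left _ _ hj')
      add_mem' := by
        intro x y hx hy
        obtain ⟨r, hr, j, hj, rfl⟩ := hx
        obtain ⟨r', hr', j', hj', rfl⟩ := hy
        exact ⟨r + r', R.add_mem hr hr', j + j', I.add_mem hj hj', by first | noncomm_ring | abel⟩
      zero_mem' := ⟨0, R.zero_mem, 0, I.zero_mem, by first | noncomm_ring | abel⟩
      neg_mem' := by
        intro x hx
        obtain ⟨r, hr, j, hj, rfl⟩ := hx
        exact ⟨-r, R.neg_mem hr, -j, I.neg_mem hj, by first | noncomm_ring | abel⟩ }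
  have hRT : R ≤ T := fun r hr => ⟨r, hr, 0, I.zero_mem, by first | noncomm_ring | abel⟩
  rcases hmax.2 T hRT with h | h
  · exfalso
    have : i₀ ∈ T := ⟨0, R.zero_mem, i₀, hi₀I, by first | noncomm_ring | abel⟩
    rw [h] at this
    exact hi₀ (hRI i₀ this hi₀I)
  · intro s
    have : s ∈ T := h ▸ Subring.mem_top s
    exact this

/-- The annihilator trick: `q R p = 0` , `p I q ≠ 0` and `I·I ≠ 0` are contradictory. -/
private lemma lemX (hmax : IsMaximalSubring R)
    (hRI : ∀ x : S, x ∈ R → x ∈ I → x = 0) (p q : S)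
    (hqp : ∀ r ∈ R, q * r * p = 0)
    (hii : ∃ x ∈ I, ∃ y ∈ I, x * y ≠ 0)
    (hex : ∃ i ∈ I, p * i * q ≠ 0) : False := by
  classical
  set gen : Set S := {x | ∃ u ∈ R, ∃ i ∈ I, ∃ v ∈ R, x = u * (p * i * q) * v} with hgen
  set C : AddSubgroup S := AddSubgroup.closure gen with hC
  have hsub : ∀ x ∈ C, x ∈ I := by
    intro x hx
    refine AddSubgroup.closure_induction ?_ ?_ ?_ ?_ hx
    · rintro y ⟨u, hu, i, hi, v, hv, rfl⟩
      exact I.mul_mem_right _ _ (I.mul_mem_left _ _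
        (I.mul_mem_right _ _ (I.mul_mem_left _ _ hi)))
    · exact I.zero_mem
    · intro a b _ _ ha hb
      exact I.add_mem ha hb
    · intro a _ ha
      exact I.neg_mem ha
  have hzero : ∀ x ∈ C, ∀ y ∈ C, x * y = 0 := by
    intro x hx y hy
    refine AddSubgroup.closure_induction₂ ?_ ?_ ?_ ?_ ?_ ?_ ?_ hx hy
    · rintro a b ⟨u, hu, i, hi, v, hv, rfl⟩ ⟨u', hu', j, hj, v', hv', rfl⟩
      have h0 : q * (v * u') * p = 0 := hqp _ (R.mul_mem hv hu')
      calc (u * (p * i * q) * v) * (u' * (p * j * q) * v')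
          = (u * (p * i)) * (q * (v * u') * p) * (j * (q * v')) := by first | noncomm_ring | abel
        _ = 0 := by rw [h0]; simp
    · intro a _; simp
    · intro a _; simp
    · intro a b c _ _ _ h1 h2
      rw [add_mul, h1, h2, add_zero]
    · intro a b c _ _ _ h1 h2
      rw [mul_add, h1, h2, add_zero]
    · intro a b _ _ h1
      rw [neg_mul, h1, neg_zero]
    · intro a b _ _ h1
      rw [mul_neg, h1, neg_zero]
  have hLc : ∀ r ∈ R, ∀ x ∈ C, r * x ∈ C := by
    intro r hr x hx
    refine AddSubgroup.closure_induction ?_ ?_ ?_ ?_ hx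
    · rintro y ⟨u, hu, i, hi, v, hv, rfl⟩
      exact AddSubgroup.subset_closure ⟨r * u, R.mul_mem hr hu, i, hi, v, hv, by first | noncomm_ring | abel⟩
    · rw [mul_zero]; exact C.zero_mem
    · intro a b _ _ ha hb
      rw [mul_add]; exact C.add_mem ha hb
    · intro a _ ha
      rw [mul_neg]; exact C.neg_mem ha
  have hRc : ∀ r ∈ R, ∀ x ∈ C, x * r ∈ C := by
    intro r hr x hx
    refine AddSubgroup.closure_induction ?_ ?_ ?_ ?_ hx
    · rintro y ⟨u, hu, i, hi, v, hv, rfl⟩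
      exact AddSubgroup.subset_closure ⟨u, hu, i, hi, v * r, R.mul_mem hv hr, by first | noncomm_ring | abel⟩
    · rw [zero_mul]; exact C.zero_mem
    · intro a b _ _ ha hb
      rw [add_mul]; exact C.add_mem ha hb
    · intro a _ ha
      rw [neg_mul]; exact C.neg_mem ha
  obtain ⟨j₀, hj₀, hne⟩ := hex
  have hg : p * j₀ * q ∈ C :=
    AddSubgroup.subset_closure ⟨1, R.one_mem, j₀, hj₀, 1, R.one_mem, by first | noncomm_ring | abel⟩
  rcases dich hmax hRI (fun x => x ∈ C) hsub C.zero_mem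
      (fun x y hx hy => C.add_mem hx hy) (fun x hx => C.neg_mem hx)
      (fun r hr x hx => hLc r hr x hx) (fun r hr x hx => hRc r hr x hx)
      (fun x y hx hy => by
        have h := hzero x hx y hy
        rw [h]; exact C.zero_mem) with h | h
  · exact hne (h _ hg)
  · obtain ⟨x, hx, y, hy, hxy⟩ := hii
    exact hxy (hzero x (h x hx) y (h y hy))

end Aux

/-- Let `R` be a maximal subring of `S` and `I` a nonzero two-sided
ideal of `S` with `R ∩ I = {0}`.  TFAE: (1) `S` is prime; (2) the left and right
annihilators of `I` in `S` are zero; (3) `I·I ≠ 0`, `ann_R(I) = 0`, and the only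
`R`-homomorphism `I → R` is zero.  Moreover if `S` is prime then `R` is prime. -/
theorem stmt10 {S : Type*} [Ring S] (R : Subring S) (hmax : IsMaximalSubring R)
    (I : TwoSidedIdeal S) (hI : I ≠ ⊥)
    (hRI : ∀ x : S, x ∈ R → x ∈ I → x = 0) :
    (IsPrimeRing S ↔
      ((∀ s : S, (∀ i ∈ I, s * i = 0) → s = 0) ∧
       (∀ s : S, (∀ i ∈ I, i * s = 0) → s = 0))) ∧
    (IsPrimeRing S ↔
      ((∃ x ∈ I, ∃ y ∈ I, x * y ≠ 0) ∧
       (∀ x ∈ R, (∀ i ∈ I, x * i = 0 ∧ i * x = 0) → x = 0) ∧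
       (∀ f : S → S, IsRHomToR R I f → ∀ i ∈ I, f i = 0))) ∧
    (IsPrimeRing S →
      ∀ a ∈ R, ∀ b ∈ R, (∀ x ∈ R, a * x * b = 0) → a = 0 ∨ b = 0) := by
  classical
  obtain ⟨i₀, hi₀I, hi₀⟩ := exist_ne_zero hI
  -- Part 1 : prime ↔ annihilator conditions
  have part1 : IsPrimeRing S ↔
      ((∀ s : S, (∀ i ∈ I, s * i = 0) → s = 0) ∧
       (∀ s : S, (∀ i ∈ I, i * s = 0) → s = 0)) := by
    constructor
    · intro h
      constructor
      · intro s hs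
        rcases h s i₀ (fun x => by
          rw [mul_assoc]
          exact hs _ (I.mul_mem_left x i₀ hi₀I)) with h' | h'
        · exact h'
        · exact absurd h' hi₀
      · intro s hs
        rcases h i₀ s (fun x => hs _ (I.mul_mem_right i₀ x hi₀I)) with h' | h'
        · exact absurd h' hi₀
        · exact h'
    · rintro ⟨hl, hr⟩ a b hab
      by_contra hcon
      push_neg at hcon
      obtain ⟨ha, hb⟩ := hcon
      -- Step 1: I * S * b = 0
      have step1 : ∀ i ∈ I, ∀ x : S, i * x * b = 0 := by
        rcases dich hmax hRI (fun s => s ∈ I ∧ ∀ x : S, s * x * b = 0)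
            (fun x hx => hx.1)
            ⟨I.zero_mem, fun x => by simp⟩
            (fun x y hx hy => ⟨I.add_mem hx.1 hy.1, fun z => by
              rw [add_mul, add_mul, hx.2 z, hy.2 z, add_zero]⟩)
            (fun x hx => ⟨I.neg_mem hx.1, fun z => by
              rw [neg_mul, neg_mul, hx.2 z, neg_zero]⟩)
            (fun r hrR x hx => ⟨I.mul_mem_left r x hx.1, fun z => by
              have h1 : r * x * z * b = r * (x * z * b) := by first | noncomm_ring | abel
              rw [h1, hx.2 z, mul_zero]⟩)
            (fun r hrR x hx => ⟨I.mul_mem_right x r hx.1, fun z => by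
              have h1 : x * r * z * b = x * (r * z) * b := by first | noncomm_ring | abel
              rw [h1, hx.2 (r * z)]⟩)
            (fun x y hx hy => ⟨I.mul_mem_right x y hx.1, fun z => by
              have h1 : x * y * z * b = x * (y * z) * b := by first | noncomm_ring | abel
              rw [h1, hx.2 (y * z)]⟩) with h | h
        · exfalso
          apply ha
          apply hl
          intro i hi
          apply h (a * i)
          refine ⟨I.mul_mem_left a i hi, fun x => ?_⟩
          have h1 : a * i * x * b = a * (i * x) * b := by first | noncomm_ring | abel
          rw [h1]
          exact hab (i * x)
        · exact fun i hi x => (h i hi).2 x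
      -- Step 2: I * S * I = 0
      have step2 : ∀ i ∈ I, ∀ x : S, ∀ j ∈ I, j * x * i = 0 := by
        rcases dich hmax hRI (fun s => s ∈ I ∧ ∀ x : S, ∀ j ∈ I, j * x * s = 0)
            (fun x hx => hx.1)
            ⟨I.zero_mem, fun x j hj => by simp⟩
            (fun x y hx hy => ⟨I.add_mem hx.1 hy.1, fun z j hj => by
              rw [mul_add, hx.2 z j hj, hy.2 z j hj, add_zero]⟩)
            (fun x hx => ⟨I.neg_mem hx.1, fun z j hj => by
              rw [mul_neg, hx.2 z j hj, neg_zero]⟩)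
            (fun r hrR x hx => ⟨I.mul_mem_left r x hx.1, fun z j hj => by
              have h1 : j * z * (r * x) = j * (z * r) * x := by first | noncomm_ring | abel
              rw [h1, hx.2 (z * r) j hj]⟩)
            (fun r hrR x hx => ⟨I.mul_mem_right x r hx.1, fun z j hj => by
              have h1 : j * z * (x * r) = j * z * x * r := by first | noncomm_ring | abel
              rw [h1, hx.2 z j hj, zero_mul]⟩)
            (fun x y hx hy => ⟨I.mul_mem_right x y hx.1, fun z j hj => by
              have h1 : j * z * (x * y) = j * (z * x) * y := by first | noncomm_ring | abel
              rw [h1, hy.2 (z * x) j hj]⟩) with h | h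
        · exfalso
          apply hb
          apply hr
          intro i hi
          apply h (i * b)
          refine ⟨I.mul_mem_right i b hi, fun z j hj => ?_⟩
          have h1 : j * z * (i * b) = j * (z * i) * b := by first | noncomm_ring | abel
          rw [h1]
          exact step1 j hj (z * i)
        · exact fun i hi x j hj => (h i hi).2 x j hj
      apply hi₀
      apply hl i₀
      intro i hi
      have h := step2 i hi 1 i₀ hi₀I
      simpa using h
  -- `I · I ≠ 0` given primeness
  have hiiOfPrime : IsPrimeRing S → ∃ x ∈ I, ∃ y ∈ I, x * y ≠ 0 := by
    intro hS
    by_contra hc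
    push_neg at hc
    apply hi₀
    exact (part1.mp hS).1 i₀ (fun j hj => hc i₀ hi₀I j hj)
  refine ⟨part1, ?_, ?_⟩
  · -- Part 2 : prime ↔ condition (3)
    constructor
    · intro hS
      obtain ⟨hl, hr⟩ := part1.mp hS
      refine ⟨hiiOfPrime hS, ?_, ?_⟩
      · intro x hx h
        exact hl x (fun i hi => (h i hi).1)
      · rintro f ⟨hmem, haddf, hlf, hrf, hmulf⟩ i hi
        have f0 : f 0 = 0 := by
          have h := haddf 0 I.zero_mem 0 I.zero_mem
          rw [add_zero] at h
          exact right_eq_add.mp h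
        have fsub : ∀ u ∈ I, ∀ w ∈ I, f (u - w) = f u - f w := by
          intro u hu w hw
          have h := haddf w hw (u - w) (I.sub_mem hu hw)
          rw [add_sub_cancel] at h
          rw [h]; noncomm_ring
        rcases dich hmax hRI (fun s => s ∈ I ∧ f s = 0)
            (fun x hx => hx.1)
            ⟨I.zero_mem, f0⟩
            (fun x y hx hy => ⟨I.add_mem hx.1 hy.1, by
              rw [haddf x hx.1 y hy.1, hx.2, hy.2, add_zero]⟩)
            (fun x hx => ⟨I.neg_mem hx.1, by
              have h := fsub 0 I.zero_mem x hx.1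
              rw [zero_sub] at h
              rw [h, hx.2, f0, sub_zero]⟩)
            (fun r hrR x hx => ⟨I.mul_mem_left r x hx.1, by
              rw [hlf r hrR x hx.1, hx.2, mul_zero]⟩)
            (fun r hrR x hx => ⟨I.mul_mem_right x r hx.1, by
              rw [hrf r hrR x hx.1, hx.2, zero_mul]⟩)
            (fun x y hx hy => ⟨I.mul_mem_right x y hx.1, by
              rw [hmulf x hx.1 y hy.1, hx.2, zero_mul]⟩) with h | h
        · -- kernel is zero: contradiction
          exfalso
          have key : ∀ j ∈ I, j = (0 : S) := by
            intro j hj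
            have hfj : f j ∈ R := hmem j hj
            have hann : ∀ i' ∈ I, i' * (j - f j) = 0 := by
              intro i' hi'
              have e1 : f (i' * f j) = f i' * f j := hrf (f j) hfj i' hi'
              have e2 : f (i' * j) = f i' * f j := hmulf i' hi' j hj
              have hm1 : i' * j ∈ I := I.mul_mem_right i' j hi'
              have hm2 : i' * f j ∈ I := I.mul_mem_right i' (f j) hi'
              have e3 : f (i' * j - i' * f j) = 0 := by
                rw [fsub _ hm1 _ hm2, e1, e2, sub_self]
              have e4 : i' * j - i' * f j = 0 := h _ ⟨I.sub_mem hm1 hm2, e3⟩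
              rw [mul_sub]
              exact e4
            have hzero : j - f j = 0 := (part1.mp hS).2 _ hann
            have : j = f j := by
              have := sub_eq_zero.mp hzero
              exact this
            apply hRI j (this ▸ hfj) hj
          exact hi₀ (key i₀ hi₀I)
        · exact (h i hi).2
    · rintro ⟨hii, hann, hhom⟩
      apply part1.mpr
      -- dichotomy for left/right annihilators inside I
      have dL : ∀ x, (x ∈ I ∧ ∀ j ∈ I, x * j = 0) → x = 0 := by
        rcases dich hmax hRI (fun s => s ∈ I ∧ ∀ j ∈ I, s * j = 0)
            (fun x hx => hx.1)
            ⟨I.zero_mem, fun j hj => by simp⟩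
            (fun x y hx hy => ⟨I.add_mem hx.1 hy.1, fun j hj => by
              rw [add_mul, hx.2 j hj, hy.2 j hj, add_zero]⟩)
            (fun x hx => ⟨I.neg_mem hx.1, fun j hj => by
              rw [neg_mul, hx.2 j hj, neg_zero]⟩)
            (fun r hrR x hx => ⟨I.mul_mem_left r x hx.1, fun j hj => by
              rw [mul_assoc, hx.2 j hj, mul_zero]⟩)
            (fun r hrR x hx => ⟨I.mul_mem_right x r hx.1, fun j hj => by
              rw [mul_assoc, hx.2 (r * j) (I.mul_mem_left r j hj)]⟩)
            (fun x y hx hy => ⟨I.mul_mem_right x y hx.1, fun j hj => by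
              rw [mul_assoc, hx.2 (y * j) (I.mul_mem_right y j hy.1)]⟩) with h | h
        · exact h
        · exfalso
          obtain ⟨x, hx, y, hy, hxy⟩ := hii
          exact hxy ((h x hx).2 y hy)
      have dR : ∀ x, (x ∈ I ∧ ∀ j ∈ I, j * x = 0) → x = 0 := by
        rcases dich hmax hRI (fun s => s ∈ I ∧ ∀ j ∈ I, j * s = 0)
            (fun x hx => hx.1)
            ⟨I.zero_mem, fun j hj => by simp⟩
            (fun x y hx hy => ⟨I.add_mem hx.1 hy.1, fun j hj => by
              rw [mul_add, hx.2 j hj, hy.2 j hj, add_zero]⟩)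
            (fun x hx => ⟨I.neg_mem hx.1, fun j hj => by
              rw [mul_neg, hx.2 j hj, neg_zero]⟩)
            (fun r hrR x hx => ⟨I.mul_mem_left r x hx.1, fun j hj => by
              rw [← mul_assoc, hx.2 (j * r) (I.mul_mem_right j r hj)]⟩)
            (fun r hrR x hx => ⟨I.mul_mem_right x r hx.1, fun j hj => by
              rw [← mul_assoc, hx.2 j hj, zero_mul]⟩)
            (fun x y hx hy => ⟨I.mul_mem_right x y hx.1, fun j hj => by
              rw [← mul_assoc, hy.2 (j * x) (I.mul_mem_right j x hj)]⟩) with h | h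
        · exact h
        · exfalso
          obtain ⟨x, hx, y, hy, hxy⟩ := hii
          exact hxy ((h y hy).2 x hx)
      -- the two-sided annihilator N
      set N : S → Prop := fun s => (∀ i ∈ I, s * i = 0) ∧ (∀ i ∈ I, i * s = 0) with hN
      have hNzero : ∀ s, N s → s = 0 := by
        intro s hNs
        let T : Subring S :=
          { carrier := {x | ∃ r ∈ R, ∃ n, N n ∧ x = r + n}
            one_mem' := ⟨1, R.one_mem, 0, ⟨fun i _ => by simp, fun i _ => by simp⟩, by first | noncomm_ring | abel⟩
            mul_mem' := by
              intro x y hx hy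
              obtain ⟨r, hr, n, hn, rfl⟩ := hx
              obtain ⟨r', hr', n', hn', rfl⟩ := hy
              refine ⟨r * r', R.mul_mem hr hr', r * n' + n * r' + n * n', ?_, by first | noncomm_ring | abel⟩
              constructor
              · intro i hi
                simp only [add_mul, mul_assoc]
                rw [hn'.1 i hi, hn.1 (r' * i) (I.mul_mem_left r' i hi)]
                simp
              · intro i hi
                simp only [mul_add, ← mul_assoc]
                rw [hn'.2 (i * r) (I.mul_mem_right i r hi), hn.2 i hi]
                simp
            add_mem' := by
              intro x y hx hy
              obtain ⟨r, hr, n, hn, rfl⟩ := hx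
              obtain ⟨r', hr', n', hn', rfl⟩ := hy
              refine ⟨r + r', R.add_mem hr hr', n + n', ⟨fun i hi => by
                rw [add_mul, hn.1 i hi, hn'.1 i hi, add_zero], fun i hi => by
                rw [mul_add, hn.2 i hi, hn'.2 i hi, add_zero]⟩, by first | noncomm_ring | abel⟩
            zero_mem' := ⟨0, R.zero_mem, 0, ⟨fun i _ => by simp, fun i _ => by simp⟩, by first | noncomm_ring | abel⟩
            neg_mem' := by
              intro x hx
              obtain ⟨r, hr, n, hn, rfl⟩ := hx
              refine ⟨-r, R.neg_mem hr, -n, ⟨fun i hi => by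
                rw [neg_mul, hn.1 i hi, neg_zero], fun i hi => by
                rw [mul_neg, hn.2 i hi, neg_zero]⟩, by first | noncomm_ring | abel⟩ }
        have uniq : ∀ x, x ∈ R → N x → x = 0 := by
          intro x hx hNx
          exact hann x hx (fun i hi => ⟨hNx.1 i hi, hNx.2 i hi⟩)
        have hRT : R ≤ T := fun r hr =>
          ⟨r, hr, 0, ⟨fun i _ => by simp, fun i _ => by simp⟩, by first | noncomm_ring | abel⟩
        rcases hmax.2 T hRT with h | h
        · have hsT : s ∈ T := ⟨0, R.zero_mem, s, hNs, by first | noncomm_ring | abel⟩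
          rw [h] at hsT
          exact uniq s hsT hNs
        · exfalso
          -- build an R-hom I → R and contradict hhom
          have hch : ∀ t : S, ∃ r, r ∈ R ∧ N (t - r) := by
            intro t
            have : t ∈ T := h ▸ Subring.mem_top t
            obtain ⟨r, hr, n, hn, ht⟩ := this
            refine ⟨r, hr, ?_⟩
            have : t - r = n := by rw [ht]; noncomm_ring
            rw [this]; exact hn
          let f : S → S := fun t => (hch t).choose
          have hfR : ∀ t, f t ∈ R := fun t => (hch t).choose_spec.1
          have hfN : ∀ t, N (t - f t) := fun t => (hch t).choose_spec.2
          have Nsub : ∀ x y, N x → N y → N (x - y) := by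
            intro x y hx hy
            exact ⟨fun i hi => by rw [sub_mul, hx.1 i hi, hy.1 i hi, sub_zero],
              fun i hi => by rw [mul_sub, hx.2 i hi, hy.2 i hi, sub_zero]⟩
          have Nadd : ∀ x y, N x → N y → N (x + y) := by
            intro x y hx hy
            exact ⟨fun i hi => by rw [add_mul, hx.1 i hi, hy.1 i hi, add_zero],
              fun i hi => by rw [mul_add, hx.2 i hi, hy.2 i hi, add_zero]⟩
          have NmulL : ∀ t x, N x → N (t * x) := by
            intro t x hx
            constructor
            · intro i hi
              rw [mul_assoc, hx.1 i hi, mul_zero]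
            · intro i hi
              rw [← mul_assoc, hx.2 (i * t) (I.mul_mem_right i t hi)]
          have NmulR : ∀ t x, N x → N (x * t) := by
            intro t x hx
            constructor
            · intro i hi
              rw [mul_assoc, hx.1 (t * i) (I.mul_mem_left t i hi)]
            · intro i hi
              rw [← mul_assoc, hx.2 i hi, zero_mul]
          have feq : ∀ t w, w ∈ R → N (t - w) → f t = w := by
            intro t w hw hNw
            have h1 : N ((t - f t) - (t - w)) := Nsub _ _ (hfN t) hNw
            have h2 : (t - f t) - (t - w) = w - f t := by first | noncomm_ring | abel
            rw [h2] at h1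
            have h3 : w - f t = 0 := uniq _ (R.sub_mem hw (hfR t)) h1
            have := sub_eq_zero.mp h3
            exact this.symm
          have hIsHom : IsRHomToR R I f := by
            refine ⟨fun i _ => hfR i, ?_, ?_, ?_, ?_⟩
            · intro i hi j hj
              apply feq _ _ (R.add_mem (hfR i) (hfR j))
              have e : (i + j) - (f i + f j) = (i - f i) + (j - f j) := by first | noncomm_ring | abel
              rw [e]
              exact Nadd _ _ (hfN i) (hfN j)
            · intro r hr i hi
              apply feq _ _ (R.mul_mem hr (hfR i))
              have e : r * i - r * f i = r * (i - f i) := by first | noncomm_ring | abel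
              rw [e]
              exact NmulL _ _ (hfN i)
            · intro r hr i hi
              apply feq _ _ (R.mul_mem (hfR i) hr)
              have e : i * r - f i * r = (i - f i) * r := by first | noncomm_ring | abel
              rw [e]
              exact NmulR _ _ (hfN i)
            · intro i hi j hj
              apply feq _ _ (R.mul_mem (hfR i) (hfR j))
              have e : i * j - f i * f j = i * (j - f j) + (i - f i) * f j := by first | noncomm_ring | abel
              rw [e]
              exact Nadd _ _ (NmulL _ _ (hfN j)) (NmulR _ _ (hfN i))
          have hIN : ∀ i ∈ I, N i := by
            intro i hi
            have h0 := hhom f hIsHom i hi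
            have := hfN i
            rw [h0, sub_zero] at this
            exact this
          obtain ⟨x, hx, y, hy, hxy⟩ := hii
          exact hxy ((hIN x hx).1 y hy)
      constructor
      · intro s hs
        apply hNzero s
        refine ⟨hs, fun i hi => ?_⟩
        apply dL (i * s)
        refine ⟨I.mul_mem_right i s hi, fun j hj => ?_⟩
        rw [mul_assoc, hs j hj, mul_zero]
      · intro s hs
        apply hNzero s
        refine ⟨fun i hi => ?_, hs⟩
        apply dR (s * i)
        refine ⟨I.mul_mem_left s i hi, fun j hj => ?_⟩
        rw [← mul_assoc, hs j hj, zero_mul]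
  · -- Part 3 : S prime → R prime
    intro hS a haR b hbR hab
    by_contra hcon
    push_neg at hcon
    obtain ⟨ha, hb⟩ := hcon
    have hii := hiiOfPrime hS
    have hdec := decomp hmax hI hRI
    -- Step A : b R a = 0
    have hba : ∀ r ∈ R, b * r * a = 0 := by
      intro r hr
      by_contra hc
      set c := b * r * a with hcdef
      have hcRc : ∀ r' ∈ R, c * r' * c = 0 := by
        intro r' hr'
        calc c * r' * c = (b * r) * (a * r' * b) * (r * a) := by rw [hcdef]; noncomm_ring
          _ = 0 := by rw [hab r' hr']; simp
      have hex : ∃ i ∈ I, c * i * c ≠ 0 := by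
        have hxs : ∃ x : S, c * x * c ≠ 0 := by
          by_contra hcc
          push_neg at hcc
          rcases hS c c hcc with h | h <;> exact hc h
        obtain ⟨x, hx⟩ := hxs
        obtain ⟨r'', hr'', i, hi, rfl⟩ := hdec x
        refine ⟨i, hi, fun h0 => hx ?_⟩
        calc c * (r'' + i) * c = c * r'' * c + c * i * c := by first | noncomm_ring | abel
          _ = 0 := by rw [hcRc r'' hr'', h0, add_zero]
      exact lemX hmax hRI c c hcRc hii hex
    -- Step B : contradiction
    have hex2 : ∃ i ∈ I, a * i * b ≠ 0 := by
      have hxs : ∃ x : S, a * x * b ≠ 0 := by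
        by_contra hcc
        push_neg at hcc
        rcases hS a b hcc with h | h
        · exact ha h
        · exact hb h
      obtain ⟨x, hx⟩ := hxs
      obtain ⟨r'', hr'', i, hi, rfl⟩ := hdec x
      refine ⟨i, hi, fun h0 => hx ?_⟩
      calc a * (r'' + i) * b = a * r'' * b + a * i * b := by first | noncomm_ring | abel
        _ = 0 := by rw [hab r'' hr'', h0, add_zero]
    exact lemX hmax hRI a b hba hii hex2
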